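/- Let G = ⟨a, b⟩ be a GGS-group acting on the p^n-adic tree with defining vector e, let p^{R_0} be the largest power of p dividing all e_i, and set S[0] = e_1 + e_2 + ⋯ + e_{p^n−1}. If p^n divides S[0], then the order of the element ab in G equals p^{2n − R_0}. -/

import Mathlib

/-- The rooted automorphism `a` of the `d`-adic tree (vertices are words over
the alphabet `ZMod d`), acting as the cycle `(1 2 ⋯ d)` on first-level
vertices. -/
def ggsA (d : ℕ) : Equiv.Perm (List (ZMod d)) where
  toFun w := match w with
    | [] => []
    | u :: t => (u + 1) :: t
  invFun w := match w with
    | [] => []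
    | u :: t => (u - 1) :: t
  left_inv w := by cases w <;> simp
  right_inv w := by cases w <;> simp

/-- The underlying function of the directed automorphism `b` with defining
vector `e`, satisfying `ψ(b) = (a^{e_1}, …, a^{e_{d-1}}, b)` (the letter `0`
plays the role of the last letter `d`). -/
def ggsBFun (d : ℕ) (e : ZMod d → ZMod d) : List (ZMod d) → List (ZMod d)
  | [] => []
  | u :: t => u :: (if u = 0 then ggsBFun d e t else (ggsA d ^ (e u).val) t)

/-- The inverse of `ggsBFun`. -/
def ggsBInv (d : ℕ) (e : ZMod d → ZMod d) : List (ZMod d) → List (ZMod d)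
  | [] => []
  | u :: t => u :: (if u = 0 then ggsBInv d e t else ((ggsA d ^ (e u).val)⁻¹) t)

theorem ggsB_left_inv (d : ℕ) (e : ZMod d → ZMod d) :
    ∀ w, ggsBInv d e (ggsBFun d e w) = w := by
  intro w
  induction w with
  | nil => rfl
  | cons u t ih =>
      by_cases hu : u = 0 <;> simp [ggsBFun, ggsBInv, hu, ih]

theorem ggsB_right_inv (d : ℕ) (e : ZMod d → ZMod d) :
    ∀ w, ggsBFun d e (ggsBInv d e w) = w := by
  intro w
  induction w with
  | nil => rfl
  | cons u t ih =>
      by_cases hu : u = 0 <;> simp [ggsBFun, ggsBInv, hu, ih]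

/-- The directed automorphism `b` of the `d`-adic tree with defining vector
`e`, given recursively by `ψ(b) = (a^{e_1}, …, a^{e_{d-1}}, b)`. -/
def ggsB (d : ℕ) (e : ZMod d → ZMod d) : Equiv.Perm (List (ZMod d)) where
  toFun := ggsBFun d e
  invFun := ggsBInv d e
  left_inv := ggsB_left_inv d e
  right_inv := ggsB_right_inv d e

/-- The GGS-group `G = ⟨a, b⟩` acting on the `d`-adic tree with defining
vector `e`. -/
def ggsGroup (d : ℕ) (e : ZMod d → ZMod d) :
    Subgroup (Equiv.Perm (List (ZMod d))) :=
  Subgroup.closure {ggsA d, ggsB d e}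

section
variable (d : ℕ) (e : ZMod d → ZMod d)

theorem ggsA_pow_nil (k : ℕ) : (ggsA d ^ k) [] = [] := by
  induction k with
  | zero => rfl
  | succ k ih => rw [pow_succ', Equiv.Perm.mul_apply, ih]; rfl

theorem ggsA_pow_cons (k : ℕ) (u : ZMod d) (t : List (ZMod d)) :
    (ggsA d ^ k) (u :: t) = (u + (k : ZMod d)) :: t := by
  induction k with
  | zero => simp
  | succ k ih =>
      rw [pow_succ', Equiv.Perm.mul_apply, ih]
      show (_ + 1) :: t = _
      push_cast
      ring_nf

theorem ggsA_pow_eq_one (k : ℕ) (h : d ∣ k) : ggsA d ^ k = 1 := by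
  apply Equiv.ext; intro w
  cases w with
  | nil => rw [ggsA_pow_nil]; rfl
  | cons u t =>
      rw [ggsA_pow_cons, (ZMod.natCast_eq_zero_iff k d).2 h, add_zero]
      rfl

theorem ggsB_apply_cons (u : ZMod d) (t : List (ZMod d)) :
    ggsB d e (u :: t) =
      u :: (if u = 0 then ggsB d e t else (ggsA d ^ (e u).val) t) := rfl

theorem ggsB_pow_nil (k : ℕ) : (ggsB d e ^ k) [] = [] := by
  induction k with
  | zero => rfl
  | succ k ih => rw [pow_succ', Equiv.Perm.mul_apply, ih]; rfl

theorem ggsB_pow_cons (k : ℕ) (u : ZMod d) (t : List (ZMod d)) :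
    (ggsB d e ^ k) (u :: t) =
      u :: (if u = 0 then (ggsB d e ^ k) t else (ggsA d ^ ((e u).val * k)) t) := by
  induction k with
  | zero => simp
  | succ k ih =>
      rw [pow_succ', Equiv.Perm.mul_apply, Equiv.Perm.mul_apply, ih]
      by_cases hu : u = 0
      · simp [hu, ggsB_apply_cons, pow_succ', Equiv.Perm.mul_apply]
      · simp only [hu, if_false, ggsB_apply_cons]
        rw [← Equiv.Perm.mul_apply, ← pow_add]
        ring_nf

theorem ggsB_pow_eq_one (k : ℕ) (h : ∀ u, d ∣ (e u).val * k) : ggsB d e ^ k = 1 := by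
  apply Equiv.ext; intro w
  induction w with
  | nil => rw [ggsB_pow_nil]; rfl
  | cons u t ih =>
      rw [ggsB_pow_cons]
      by_cases hu : u = 0
      · simp only [hu, if_true]
        rw [ih]
        rfl
      · simp only [hu, if_false]
        rw [ggsA_pow_eq_one d _ (h u)]
        rfl

end
section
variable (d : ℕ) (e : ZMod d → ZMod d)

/-- The section of `b` or power of `a` appearing in coordinate `v` of `ψ(ab)^k`. -/
def ggsF (v : ZMod d) : Equiv.Perm (List (ZMod d)) :=
  if v = 0 then ggsB d e else ggsA d ^ (e v).val

/-- The tail transformation after applying `(ab)^k` below first letter `u`. -/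
def ggsP : ℕ → ZMod d → Equiv.Perm (List (ZMod d))
  | 0, _ => 1
  | k + 1, u => ggsF d e (u + (k : ZMod d)) * ggsP k u

theorem ggsC_nil : (ggsA d * ggsB d e) [] = [] := rfl

theorem ggsC_cons (u : ZMod d) (t : List (ZMod d)) :
    (ggsA d * ggsB d e) (u :: t) = (u + 1) :: ggsF d e u t := by
  rw [Equiv.Perm.mul_apply, ggsB_apply_cons]
  show (u + 1) :: _ = _
  by_cases hu : u = 0 <;> simp [ggsF, hu]

theorem ggsC_pow_nil (k : ℕ) : ((ggsA d * ggsB d e) ^ k) [] = [] := by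
  induction k with
  | zero => rfl
  | succ k ih => rw [pow_succ', Equiv.Perm.mul_apply, ih, ggsC_nil]

theorem ggsC_pow_cons (k : ℕ) (u : ZMod d) (t : List (ZMod d)) :
    ((ggsA d * ggsB d e) ^ k) (u :: t) = (u + (k : ZMod d)) :: ggsP d e k u t := by
  induction k with
  | zero => simp [ggsP]
  | succ k ih =>
      rw [pow_succ', Equiv.Perm.mul_apply, ih, ggsC_cons, ggsP]
      simp only [Equiv.Perm.coe_mul, Function.comp_apply]
      push_cast
      rw [add_assoc]

theorem ggsP_add (k l : ℕ) (u : ZMod d) :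
    ggsP d e (k + l) u = ggsP d e l (u + (k : ZMod d)) * ggsP d e k u := by
  induction l with
  | zero => simp [ggsP]
  | succ l ih =>
      show ggsF d e (u + ((k + l : ℕ) : ZMod d)) * ggsP d e (k + l) u = _
      rw [ih, ggsP]
      push_cast
      rw [mul_assoc]
      ring_nf

theorem ggsP_run (k : ℕ) (u : ZMod d) (h : ∀ j < k, u + (j : ZMod d) ≠ 0) :
    ggsP d e k u = ggsA d ^ (∑ j ∈ Finset.range k, (e (u + (j : ZMod d))).val) := by
  induction k with
  | zero => simp [ggsP]
  | succ k ih =>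
      rw [ggsP, ih (fun j hj => h j (Nat.lt_succ_of_lt hj)), ggsF,
        if_neg (h k (Nat.lt_succ_self k)), ← pow_add, Finset.sum_range_succ]
      ring_nf

theorem ggsP_mul (m : ℕ) (u : ZMod d) :
    ggsP d e (d * m) u = (ggsP d e d u) ^ m := by
  induction m with
  | zero => simp [ggsP]
  | succ m ih =>
      rw [Nat.mul_succ, ggsP_add, ih, pow_succ',
        show ((d * m : ℕ) : ZMod d) = 0 from (ZMod.natCast_eq_zero_iff _ d).2 ⟨m, rfl⟩,
        add_zero]

end
section
variable (d : ℕ) (e : ZMod d → ZMod d)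

theorem ggsP_conj [NeZero d] (he0 : e 0 = 0)
    (hS : d ∣ ∑ i ∈ Finset.range d, (e (i : ZMod d)).val) (u : ZMod d) :
    ∃ A : ℕ, ggsP d e d u = (ggsA d ^ A)⁻¹ * ggsB d e * ggsA d ^ A := by
  have hd : 0 < d := Nat.pos_of_ne_zero (NeZero.ne d)
  have hv : u.val < d := ZMod.val_lt u
  have hv0 : u ≠ 0 → 0 < u.val := by
    intro h
    rcases Nat.eq_zero_or_pos u.val with h0 | h0
    · exact absurd ((ZMod.val_eq_zero u).1 h0) h
    · exact h0
  set m : ℕ := if u = 0 then 0 else d - u.val with hm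
  have hmd : m < d := by
    by_cases hu : u = 0
    · simpa [hm, hu] using hd
    · have := hv0 hu; simp only [hm, hu, if_false]; omega
  set r : ℕ := d - m - 1 with hr
  have hum : u + (m : ZMod d) = 0 := by
    by_cases hu : u = 0
    · simp [hm, hu]
    · simp only [hm, hu, if_false]
      calc u + ((d - u.val : ℕ) : ZMod d)
          = ((u.val : ℕ) : ZMod d) + ((d - u.val : ℕ) : ZMod d) := by
            rw [ZMod.natCast_zmod_val]
        _ = 0 := by
            rw [← Nat.cast_add, show u.val + (d - u.val) = d by omega, ZMod.natCast_self]
  -- split the product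
  have h1 : ggsP d e d u
      = ggsP d e r (u + ((m + 1 : ℕ) : ZMod d)) * (ggsF d e (u + (m : ZMod d)) * ggsP d e m u) := by
    have hd_eq : d = m + 1 + r := by omega
    have h2 : ggsP d e d u = ggsP d e (m + 1 + r) u := by rw [← hd_eq]
    rw [h2, ggsP_add]
    rfl
  -- the middle factor is b
  rw [ggsF, if_pos hum] at h1
  -- the right factor is a power of a
  have hA : ggsP d e m u = ggsA d ^ (∑ j ∈ Finset.range m, (e (u + (j : ZMod d))).val) := by
    apply ggsP_run
    intro j hj h0
    have hu : u ≠ 0 := by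
      intro hu; rw [hm, if_pos hu] at hj; omega
    have hvpos := hv0 hu
    rw [hm, if_neg hu] at hj
    rw [← ZMod.natCast_zmod_val u, ← Nat.cast_add,
      ZMod.natCast_eq_zero_iff] at h0
    have := Nat.le_of_dvd (by omega) h0
    omega
  -- the left factor is a power of a, based at 1
  have hbase : u + ((m + 1 : ℕ) : ZMod d) = (1 : ZMod d) := by
    push_cast
    rw [← add_assoc, hum, zero_add]
  have hB : ggsP d e r (u + ((m + 1 : ℕ) : ZMod d))
      = ggsA d ^ (∑ j ∈ Finset.range r, (e ((1 : ZMod d) + (j : ZMod d))).val) := by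
    rw [hbase]
    apply ggsP_run
    intro j hj h0
    rw [show (1 : ZMod d) + (j : ZMod d) = ((1 + j : ℕ) : ZMod d) by push_cast; ring,
      ZMod.natCast_eq_zero_iff] at h0
    have := Nat.le_of_dvd (by omega) h0
    omega
  set A : ℕ := ∑ j ∈ Finset.range m, (e (u + (j : ZMod d))).val with hAdef
  set B : ℕ := ∑ j ∈ Finset.range r, (e ((1 : ZMod d) + (j : ZMod d))).val with hBdef
  -- key sum identity
  have hsum : d ∣ B + A := by
    have hA' : A = ∑ i ∈ Finset.Ico u.val (u.val + m), (e (i : ZMod d)).val := by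
      rw [Finset.sum_Ico_eq_sum_range]
      simp only [Nat.add_sub_cancel_left]
      apply Finset.sum_congr rfl
      intro j _
      congr 1
      push_cast [ZMod.natCast_zmod_val]
      ring
    have hB' : B = ∑ i ∈ Finset.Ico 1 (1 + r), (e (i : ZMod d)).val := by
      rw [Finset.sum_Ico_eq_sum_range]
      simp only [Nat.add_sub_cancel_left]
      apply Finset.sum_congr rfl
      intro j _
      congr 1
      push_cast
      ring
    have hS' : ∑ i ∈ Finset.range d, (e (i : ZMod d)).val
        = (e ((0 : ℕ) : ZMod d)).val + ∑ i ∈ Finset.Ico 1 d, (e (i : ZMod d)).val := by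
      rw [Finset.range_eq_Ico, Finset.sum_eq_sum_Ico_succ_bot hd]
    have he0' : (e ((0 : ℕ) : ZMod d)).val = 0 := by
      rw [Nat.cast_zero, he0, ZMod.val_zero]
    by_cases hu : u = 0
    · have hm0 : m = 0 := by rw [hm, if_pos hu]
      have hr0 : 1 + r = d := by omega
      have hA0 : A = 0 := by rw [hAdef, hm0, Finset.range_zero, Finset.sum_empty]
      rw [hA0, hB', hr0, add_zero]
      rw [hS', he0', zero_add] at hS
      exact hS
    · have hvpos := hv0 hu
      have hmval : m = d - u.val := by rw [hm, if_neg hu]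
      have hrv : 1 + r = u.val := by omega
      have hcons : ∑ i ∈ Finset.Ico 1 u.val, (e (i : ZMod d)).val
          + ∑ i ∈ Finset.Ico u.val d, (e (i : ZMod d)).val
          = ∑ i ∈ Finset.Ico 1 d, (e (i : ZMod d)).val :=
        Finset.sum_Ico_consecutive _ (by omega) (by omega)
      rw [hA', hB', hrv, show u.val + m = d by omega, hcons]
      rw [hS', he0', zero_add] at hS
      exact hS
  have hone : ggsA d ^ B * ggsA d ^ A = 1 := by
    rw [← pow_add]
    exact ggsA_pow_eq_one d _ hsum
  refine ⟨A, ?_⟩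
  rw [h1, hA, hB, eq_inv_of_mul_eq_one_left hone, mul_assoc]

end
section
variable (d : ℕ) (e : ZMod d → ZMod d)

theorem ggsC_pow_mul_eq_one_iff [NeZero d] (he0 : e 0 = 0)
    (hS : d ∣ ∑ i ∈ Finset.range d, (e (i : ZMod d)).val) (m : ℕ) :
    (ggsA d * ggsB d e) ^ (d * m) = 1 ↔ ggsB d e ^ m = 1 := by
  have hcast : ((d * m : ℕ) : ZMod d) = 0 :=
    (ZMod.natCast_eq_zero_iff _ d).2 ⟨m, rfl⟩
  constructor
  · intro h
    obtain ⟨A, hA⟩ := ggsP_conj d e he0 hS 0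
    have hP : ggsP d e d 0 ^ m = 1 := by
      rw [← ggsP_mul]
      apply Equiv.ext
      intro w
      have := congrArg (fun f : Equiv.Perm (List (ZMod d)) => f ((0 : ZMod d) :: w)) h
      simp only [Equiv.Perm.one_apply] at this
      rw [ggsC_pow_cons, hcast, add_zero] at this
      simpa using this
    rw [hA] at hP
    have hconj := conj_pow (a := (ggsA d ^ A)⁻¹) (b := ggsB d e) (i := m)
    rw [inv_inv] at hconj
    have : (ggsA d ^ A)⁻¹ * ggsB d e ^ m * ggsA d ^ A = 1 := by
      rw [← hconj, hP]
    calc ggsB d e ^ m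
        = ggsA d ^ A * ((ggsA d ^ A)⁻¹ * ggsB d e ^ m * ggsA d ^ A) * (ggsA d ^ A)⁻¹ := by
          group
      _ = 1 := by rw [this]; group
  · intro h
    apply Equiv.ext
    intro w
    cases w with
    | nil => rw [ggsC_pow_nil]; rfl
    | cons u t =>
        obtain ⟨A, hA⟩ := ggsP_conj d e he0 hS u
        have hconj := conj_pow (a := (ggsA d ^ A)⁻¹) (b := ggsB d e) (i := m)
        rw [inv_inv] at hconj
        rw [ggsC_pow_cons, hcast, add_zero, ggsP_mul, hA, hconj, h]
        simp

end
/-- For a GGS-group `G = ⟨a,b⟩` on the `p^n`-adic tree with nonzero defining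
vector `e`, where `p^{R₀}` is the largest power of `p` dividing all entries of
`e` and `S[0] = e_1 + ⋯ + e_{p^n-1}`: if `p^n ∣ S[0]`, then the order of `ab`
is `p^{2n - R₀}`. -/
theorem ggs_order_ab (p n : ℕ) (hp : p.Prime) (hn : 1 ≤ n)
    (e : ZMod (p ^ n) → ZMod (p ^ n)) (he0 : e 0 = 0) (hne : ∃ i, e i ≠ 0)
    (R₀ : ℕ) (hdvd : ∀ i, p ^ R₀ ∣ (e i).val)
    (hmax : ∃ i, ¬ p ^ (R₀ + 1) ∣ (e i).val)
    (hS : p ^ n ∣ ∑ i ∈ Finset.range (p ^ n), (e (i : ZMod (p ^ n))).val) :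
    orderOf (ggsA (p ^ n) * ggsB (p ^ n) e) = p ^ (2 * n - R₀) := by
  haveI : Fact p.Prime := ⟨hp⟩
  haveI : NeZero (p ^ n) := ⟨pow_ne_zero n hp.pos.ne'⟩
  obtain ⟨i, hi⟩ := hmax
  -- R₀ < n
  have hival : (e i).val ≠ 0 := by
    intro h0
    apply hi
    rw [h0]
    exact dvd_zero _
  have hRlt : R₀ < n := by
    have h1 : p ^ R₀ ≤ (e i).val := Nat.le_of_dvd (Nat.pos_of_ne_zero hival) (hdvd i)
    have h2 : (e i).val < p ^ n := ZMod.val_lt (e i)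
    exact (Nat.pow_lt_pow_iff_right hp.one_lt).1 (lt_of_le_of_lt h1 h2)
  -- b ^ (p ^ (n - R₀)) = 1
  have hbone : ggsB (p ^ n) e ^ (p ^ (n - R₀)) = 1 := by
    apply ggsB_pow_eq_one
    intro u
    obtain ⟨g, hg⟩ := hdvd u
    refine ⟨g, ?_⟩
    have hsplit : p ^ R₀ * p ^ (n - R₀) = p ^ n := by
      rw [← pow_add]
      congr 1
      omega
    rw [hg, ← hsplit]
    ring
  -- b ^ (p ^ (n - R₀ - 1)) ≠ 1
  have hbne : ggsB (p ^ n) e ^ (p ^ (n - R₀ - 1)) ≠ 1 := by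
    intro h
    have hi0 : i ≠ 0 := by
      intro h0
      rw [h0, he0, ZMod.val_zero] at hi
      exact hi (dvd_zero _)
    have := congrArg (fun f : Equiv.Perm (List (ZMod (p ^ n))) => f (i :: [(0 : ZMod (p ^ n))])) h
    simp only [Equiv.Perm.one_apply] at this
    rw [ggsB_pow_cons, if_neg hi0, ggsA_pow_cons] at this
    have hzero : (((e i).val * p ^ (n - R₀ - 1) : ℕ) : ZMod (p ^ n)) = 0 := by
      injection this with h1 h2
      injection h2 with h3 _
      rw [zero_add] at h3
      exact h3
    rw [ZMod.natCast_eq_zero_iff] at hzero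
    -- write (e i).val = p ^ R₀ * f with p ∤ f
    obtain ⟨f, hf⟩ := hdvd i
    have hpf : ¬ p ∣ f := by
      intro hpf
      exact hi (by rw [hf, pow_succ]; exact mul_dvd_mul_left _ hpf)
    rw [hf] at hzero
    have hfact : p ^ R₀ * f * p ^ (n - R₀ - 1) = p ^ (n - 1) * f := by
      rw [show n - 1 = R₀ + (n - R₀ - 1) by omega, pow_add]
      ring
    rw [hfact, show n = (n - 1) + 1 by omega, pow_add, pow_one] at hzero
    exact hpf ((Nat.mul_dvd_mul_iff_left (pow_pos hp.pos (n-1))).1 hzero)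
  -- c ^ (p ^ (2n - R₀)) = 1
  have hcone : (ggsA (p ^ n) * ggsB (p ^ n) e) ^ (p ^ (2 * n - R₀)) = 1 := by
    rw [show 2 * n - R₀ = n + (n - R₀) by omega, pow_add]
    exact (ggsC_pow_mul_eq_one_iff (p ^ n) e he0 hS _).2 hbone
  -- c ^ (p ^ (2n - R₀ - 1)) ≠ 1
  have hcne : ¬ (ggsA (p ^ n) * ggsB (p ^ n) e) ^ (p ^ (2 * n - R₀ - 1)) = 1 := by
    intro h
    rw [show 2 * n - R₀ - 1 = n + (n - R₀ - 1) by omega, pow_add] at h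
    exact hbne ((ggsC_pow_mul_eq_one_iff (p ^ n) e he0 hS _).1 h)
  have key := orderOf_eq_prime_pow hcne (by
    rw [show 2 * n - R₀ - 1 + 1 = 2 * n - R₀ by omega]
    exact hcone)
  rw [key, show 2 * n - R₀ - 1 + 1 = 2 * n - R₀ by omega]
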